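/- Let w be a string and i' a position such that w[i'..i'] is an L-root of a run r₀ with respect to ≺_ℓ and w[i'..j'] (with j' > i') is an L-root of a run r₁ with respect to ≺_{1-ℓ}, and both runs start strictly before position i'. Then w[i'-1] = w[i'] = w[j'], contradicting that w[i'..j'] is a Lyndon word (since a Lyndon word cannot have a border). Hence such a position i' cannot exist in a string. -/

import Mathlib

/-- A string is a Lyndon word w.r.t. an order `lt` on the alphabet:
it is (lexicographically) strictly smaller than every nonempty proper suffix. -/
def IsLyndonWrt {α : Type*} (lt : α → α → Prop) (w : List α) : Prop :=
  w ≠ [] ∧ ∀ i, 0 < i → i < w.length → List.Lex lt w (w.drop i)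

/-- The two opposite alphabet orders `≺₀` (the given one) and `≺₁` (its reverse). -/
def ltOrd {α : Type*} [LinearOrder α] : Bool → α → α → Prop
  | false, a, b => a < b
  | true,  a, b => b < a

/-- `p` is a period of `w`: `w[i] = w[i+p]` whenever both positions are valid. -/
def HasPeriod {α : Type*} (w : List α) (p : ℕ) : Prop :=
  ∀ i, i + p < w.length → w[i]? = w[i + p]?

/-- `substr w i j` is the substring `w[i..j]` (1-indexed, inclusive). -/
def substr {α : Type*} (w : List α) (i j : ℕ) : List α :=
  (w.drop (i - 1)).take (j - i + 1)

/-- `[i..j]` (1-indexed) is a run of `w` with (smallest) period `p`: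
`p` is the smallest period of `w[i..j]`, the exponent is at least 2, and the
periodicity with period `p` extends neither to the left nor to the right. -/
def IsRun {α : Type*} (w : List α) (i j p : ℕ) : Prop :=
  1 ≤ i ∧ i ≤ j ∧ j ≤ w.length ∧ 0 < p ∧
  HasPeriod (substr w i j) p ∧
  (∀ q, 0 < q → q < p → ¬ HasPeriod (substr w i j) q) ∧
  2 * p ≤ j - i + 1 ∧
  (i = 1 ∨ ¬ HasPeriod (substr w (i - 1) j) p) ∧
  (j = w.length ∨ ¬ HasPeriod (substr w i (j + 1)) p)


lemma substr_get?' {α : Type*} (w : List α) (i j k : ℕ) (hk : k < j - i + 1) :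
    (substr w i j)[k]? = w[i - 1 + k]? := by
  simp [substr, List.getElem?_take, hk, List.getElem?_drop]

lemma substr_length' {α : Type*} (w : List α) (i j : ℕ) :
    (substr w i j).length = min (j - i + 1) (w.length - (i - 1)) := by
  simp [substr]

/-- If `w[i'..i']` is an L-root (w.r.t. `≺_ℓ`) of a run `[i₀..j₀]` with period 1 that
starts strictly before `i'`, and `w[i'..j']` (with `i' < j'`) is an L-root
(w.r.t. `≺_{1-ℓ}`) of a run `[i₁..j₁]` with period `j' - i' + 1` that also starts
strictly before `i'`, then a contradiction follows (`w[i'-1] = w[i'] = w[j']` would be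
a border of the Lyndon word `w[i'..j']`); such a position `i'` cannot exist. -/
theorem stmt9 {α : Type*} [LinearOrder α] (w : List α) (ℓ : Bool)
    (i' j' i0 j0 i1 j1 : ℕ) (hij : i' < j')
    (hrun0 : IsRun w i0 j0 1) (h0a : i0 < i') (h0b : i' ≤ j0)
    (hrun1 : IsRun w i1 j1 (j' - i' + 1)) (h1a : i1 < i') (h1b : j' ≤ j1)
    (hroot0 : IsLyndonWrt (ltOrd ℓ) (substr w i' i'))
    (hroot1 : IsLyndonWrt (ltOrd (!ℓ)) (substr w i' j')) :
    False := by
  obtain ⟨hi0, -, hj0, -, hp0, -⟩ := hrun0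
  obtain ⟨hi1, -, hj1, -, hp1, -⟩ := hrun1
  -- Step 1: w[i'-1] = w[i']  (0-indexed: positions i'-2 and i'-1)
  have e1 : w[i' - 2]? = w[i' - 1]? := by
    have h := hp0 (i' - 1 - i0) (by rw [substr_length']; omega)
    rw [substr_get?' _ _ _ _ (by omega), substr_get?' _ _ _ _ (by omega)] at h
    have a1 : i0 - 1 + (i' - 1 - i0) = i' - 2 := by omega
    have a2 : i0 - 1 + (i' - 1 - i0 + 1) = i' - 1 := by omega
    rwa [a1, a2] at h
  -- Step 2: w[i'-1] = w[j']
  have e2 : w[i' - 2]? = w[j' - 1]? := by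
    have h := hp1 (i' - 1 - i1) (by rw [substr_length']; omega)
    rw [substr_get?' _ _ _ _ (by omega), substr_get?' _ _ _ _ (by omega)] at h
    have a1 : i1 - 1 + (i' - 1 - i1) = i' - 2 := by omega
    have a2 : i1 - 1 + (i' - 1 - i1 + (j' - i' + 1)) = j' - 1 := by omega
    rwa [a1, a2] at h
  have e3 : w[i' - 1]? = w[j' - 1]? := e1 ▸ e2
  -- the Lyndon word s = w[i'..j']
  set s := substr w i' j' with hs
  have hjw : j' ≤ w.length := le_trans h1b hj1
  have hslen : s.length = j' - i' + 1 := by rw [hs, substr_length']; omega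
  have hcw : j' - 1 < w.length := by omega
  obtain ⟨c, hc⟩ : ∃ c, w[j' - 1]? = some c :=
    ⟨w[j' - 1], List.getElem?_eq_getElem hcw⟩
  have hs0 : s[0]? = some c := by
    rw [hs, substr_get?' _ _ _ _ (by omega)]
    have : i' - 1 + 0 = i' - 1 := by omega
    rw [this, e3, hc]
  have hsk : s[j' - i']? = some c := by
    rw [hs, substr_get?' _ _ _ _ (by omega)]
    have : i' - 1 + (j' - i') = j' - 1 := by omega
    rw [this, hc]
  have hdrop : s.drop (j' - i') = [c] := by
    apply List.ext_getElem?
    intro n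
    rcases n with _ | n
    · simpa [List.getElem?_drop] using hsk
    · rw [List.getElem?_drop]
      have h1 : s.length ≤ j' - i' + (n + 1) := by omega
      simp [List.getElem?_eq_none h1]
  have hlex := hroot1.2 (j' - i') (by omega) (by omega)
  rw [hdrop] at hlex
  obtain ⟨t, hst⟩ : ∃ t, s = c :: t := by
    cases h : s with
    | nil => rw [h] at hs0; simp at hs0
    | cons a t =>
      rw [h] at hs0; simp at hs0
      exact ⟨t, by rw [hs0]⟩
  rw [hst] at hlex
  cases hlex with
  | rel h => cases ℓ <;> exact lt_irrefl c h
  | cons h => cases h
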